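/- Let (Ω, μ) be a probability space and F a countable set of μ-integrable real-valued functions on Ω such that the relevant suprema are integrable. Then E_{x_1,…,x_N iid ∼ μ}[ sup_{h∈F} |(1/N) Σ_{i=1}^N h(x_i) − ∫_Ω h dμ| ] ≤ 2 · E_{x_1,…,x_N iid ∼ μ} [ 2^{−N} Σ_{ξ ∈ {−1,1}^N} sup_{h∈F} |(1/N) Σ_{i=1}^N ξ_i h(x_i)| ], i.e. the expected uniform deviation between empirical averages and expectations over the class F is bounded by twice the Rademacher complexity of F (with the absolute value inside the supremum). -/

import Mathlib

open MeasureTheory Set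

noncomputable section

lemma aux_eval_mp {Ω : Type*} [MeasurableSpace Ω] (μ : Measure Ω) [IsProbabilityMeasure μ]
    {N : ℕ} (i : Fin N) :
    MeasurePreserving (fun x : Fin N → Ω => x i) (Measure.pi fun _ => μ) μ := by
  refine ⟨measurable_pi_apply i, ?_⟩
  ext s hs
  rw [Measure.map_apply (measurable_pi_apply i) hs]
  have h1 : (fun x : Fin N → Ω => x i) ⁻¹' s
      = Set.pi univ (Function.update (fun _ => (univ : Set Ω)) i s) := Set.eval_preimage
  rw [h1, Measure.pi_pi]
  rw [Finset.prod_eq_single i (fun j _ hj => by simp [Function.update_apply, hj]) (by simp)]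
  simp

lemma aux_fst_mp {α β : Type*} [MeasurableSpace α] [MeasurableSpace β]
    (μ' : Measure α) (ν' : Measure β) [SFinite μ'] [IsProbabilityMeasure ν'] :
    MeasurePreserving Prod.fst (μ'.prod ν') μ' :=
  ⟨measurable_fst, by rw [Measure.map_fst_prod]; simp⟩

lemma aux_snd_mp {α β : Type*} [MeasurableSpace α] [MeasurableSpace β]
    (μ' : Measure α) (ν' : Measure β) [IsProbabilityMeasure μ'] [SFinite ν'] :
    MeasurePreserving Prod.snd (μ'.prod ν') ν' :=
  ⟨measurable_snd, by rw [Measure.map_snd_prod]; simp⟩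

theorem symmetrization_inequality
    {Ω : Type*} [MeasurableSpace Ω] (μ : Measure Ω) [IsProbabilityMeasure μ]
    (F : Set (Ω → ℝ)) (hFc : F.Countable) (hFne : F.Nonempty)
    (hFint : ∀ h ∈ F, Integrable h μ)
    (N : ℕ) (hN : 1 ≤ N)
    (hbdd1 : ∀ x : Fin N → Ω, BddAbove ((fun h : Ω → ℝ =>
      |(N : ℝ)⁻¹ * ∑ i, h (x i) - ∫ y, h y ∂μ|) '' F))
    (hbdd2 : ∀ (x : Fin N → Ω) (ξ : Fin N → Bool), BddAbove ((fun h : Ω → ℝ =>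
      |(N : ℝ)⁻¹ * ∑ i, (if ξ i then (1 : ℝ) else -1) * h (x i)|) '' F))
    (hint1 : Integrable (fun x : Fin N → Ω =>
      sSup ((fun h : Ω → ℝ => |(N : ℝ)⁻¹ * ∑ i, h (x i) - ∫ y, h y ∂μ|) '' F))
      (Measure.pi fun _ => μ))
    (hint2 : Integrable (fun x : Fin N → Ω =>
      (2 ^ N : ℝ)⁻¹ * ∑ ξ : Fin N → Bool,
        sSup ((fun h : Ω → ℝ =>
          |(N : ℝ)⁻¹ * ∑ i, (if ξ i then (1 : ℝ) else -1) * h (x i)|) '' F))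
      (Measure.pi fun _ => μ)) :
    (∫ x : Fin N → Ω,
        sSup ((fun h : Ω → ℝ => |(N : ℝ)⁻¹ * ∑ i, h (x i) - ∫ y, h y ∂μ|) '' F)
        ∂(Measure.pi fun _ => μ))
      ≤ 2 * ∫ x : Fin N → Ω,
          (2 ^ N : ℝ)⁻¹ * ∑ ξ : Fin N → Bool,
            sSup ((fun h : Ω → ℝ =>
              |(N : ℝ)⁻¹ * ∑ i, (if ξ i then (1 : ℝ) else -1) * h (x i)|) '' F)
          ∂(Measure.pi fun _ => μ) := by
  classical
  set P : Measure (Fin N → Ω) := Measure.pi fun _ => μ with hPdef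
  set ν : Measure (Fin N → Ω × Ω) := Measure.pi fun _ => μ.prod μ with hνdef
  -- enumeration and measurable representatives
  obtain ⟨e, hFe⟩ := hFc.exists_eq_range hFne
  have heF : ∀ n, e n ∈ F := fun n => hFe ▸ mem_range_self n
  have heInt : ∀ n, Integrable (e n) μ := fun n => hFint _ (heF n)
  set g : ℕ → Ω → ℝ := fun n => (heInt n).1.mk (e n) with hgdef
  have hgM : ∀ n, Measurable (g n) := fun n => (heInt n).1.stronglyMeasurable_mk.measurable
  have hge : ∀ n, e n =ᵐ[μ] g n := fun n => (heInt n).1.ae_eq_mk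
  have hgInt : ∀ n, Integrable (g n) μ := fun n => (heInt n).congr (hge n)
  have hgiEq : ∀ n, ∫ y, e n y ∂μ = ∫ y, g n y ∂μ := fun n => integral_congr_ae (hge n)
  -- the bad set
  set B : Set Ω := ⋃ n, {ω | e n ω ≠ g n ω} with hBdef
  have hB : μ B = 0 := measure_iUnion_null fun n => ae_iff.mp (hge n)
  have hBmem : ∀ ω, ω ∉ B → ∀ n, e n ω = g n ω := by
    intro ω hω n; by_contra h; exact hω (mem_iUnion.mpr ⟨n, h⟩)
  have hG1 : ∀ᵐ x ∂P, ∀ i, x i ∉ B := by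
    rw [ae_all_iff]
    intro i
    have h0 : P ((fun x : Fin N → Ω => x i) ⁻¹' B) = 0 :=
      Measure.pi_eval_preimage_null _ hB
    rw [ae_iff]; simpa [not_not] using (show P {a | a i ∈ B} = 0 from h0)
  have hBp : (μ.prod μ) {p : Ω × Ω | p.1 ∈ B ∨ p.2 ∈ B} = 0 := by
    have hsub : {p : Ω × Ω | p.1 ∈ B ∨ p.2 ∈ B} ⊆ B ×ˢ (univ : Set Ω) ∪ (univ : Set Ω) ×ˢ B := by
      rintro ⟨a, b⟩ h
      rcases h with h | h
      · exact Or.inl ⟨h, mem_univ _⟩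
      · exact Or.inr ⟨mem_univ _, h⟩
    refine measure_mono_null hsub (measure_union_null ?_ ?_)
    · rw [Measure.prod_prod, hB]; simp
    · rw [Measure.prod_prod, hB]; simp
  have hGZ : ∀ᵐ z ∂ν, ∀ i, (z i).1 ∉ B ∧ (z i).2 ∉ B := by
    rw [ae_all_iff]
    intro i
    have h0 : ν ((fun z : Fin N → Ω × Ω => z i) ⁻¹' {p : Ω × Ω | p.1 ∈ B ∨ p.2 ∈ B}) = 0 :=
      Measure.pi_eval_preimage_null _ hBp
    rw [ae_iff]
    refine measure_mono_null ?_ h0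
    intro z hz
    simp only [mem_setOf_eq, not_and_or, not_not] at hz ⊢
    exact hz
  -- sSup over F as iSup over the enumeration
  have himg : ∀ f : (Ω → ℝ) → ℝ, sSup (f '' F) = ⨆ n, f (e n) := by
    intro f
    rw [hFe, ← Set.range_comp]
    rfl
  have hbddr : ∀ f : (Ω → ℝ) → ℝ, BddAbove (f '' F) → BddAbove (Set.range fun n => f (e n)) := by
    intro f hf
    rw [hFe, ← Set.range_comp] at hf
    exact hf
  -- the measurable versions of the suprema
  set Sg : (Fin N → Ω) → ℝ :=
    fun x => ⨆ n, |(N : ℝ)⁻¹ * ∑ i, g n (x i) - ∫ y, g n y ∂μ| with hSgdef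
  set Rg : (Fin N → Bool) → (Fin N → Ω) → ℝ :=
    fun ξ x => ⨆ n, |(N : ℝ)⁻¹ * ∑ i, (if ξ i then (1:ℝ) else -1) * g n (x i)| with hRgdef
  set Dg : (Fin N → Bool) → (Fin N → Ω × Ω) → ℝ :=
    fun ξ z => ⨆ n, |(N : ℝ)⁻¹ * ∑ i,
      (if ξ i then (1:ℝ) else -1) * (g n (z i).1 - g n (z i).2)| with hDgdef
  -- pointwise identification on the good set
  have hSe_eq : ∀ x : Fin N → Ω, (∀ i, x i ∉ B) →
      sSup ((fun h : Ω → ℝ => |(N : ℝ)⁻¹ * ∑ i, h (x i) - ∫ y, h y ∂μ|) '' F) = Sg x := by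
    intro x hx
    rw [himg]
    exact iSup_congr fun n => by
      rw [Finset.sum_congr rfl fun i _ => hBmem (x i) (hx i) n, hgiEq n]
  have hSg_bdd : ∀ x : Fin N → Ω, (∀ i, x i ∉ B) →
      BddAbove (Set.range fun n => |(N : ℝ)⁻¹ * ∑ i, g n (x i) - ∫ y, g n y ∂μ|) := by
    intro x hx
    have h1 := hbddr _ (hbdd1 x)
    have h2 : (fun n => |(N : ℝ)⁻¹ * ∑ i, e n (x i) - ∫ y, e n y ∂μ|)
        = fun n => |(N : ℝ)⁻¹ * ∑ i, g n (x i) - ∫ y, g n y ∂μ| := by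
      funext n
      rw [Finset.sum_congr rfl fun i _ => hBmem (x i) (hx i) n, hgiEq n]
    rwa [h2] at h1
  have hRe_eq : ∀ (ξ : Fin N → Bool) (x : Fin N → Ω), (∀ i, x i ∉ B) →
      sSup ((fun h : Ω → ℝ =>
        |(N : ℝ)⁻¹ * ∑ i, (if ξ i then (1 : ℝ) else -1) * h (x i)|) '' F) = Rg ξ x := by
    intro ξ x hx
    rw [himg]
    exact iSup_congr fun n => by
      rw [Finset.sum_congr rfl fun i _ => by rw [hBmem (x i) (hx i) n]]
  have hRg_bdd : ∀ (ξ : Fin N → Bool) (x : Fin N → Ω), (∀ i, x i ∉ B) →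
      BddAbove (Set.range fun n =>
        |(N : ℝ)⁻¹ * ∑ i, (if ξ i then (1:ℝ) else -1) * g n (x i)|) := by
    intro ξ x hx
    have h1 := hbddr _ (hbdd2 x ξ)
    have h2 : (fun n => |(N : ℝ)⁻¹ * ∑ i, (if ξ i then (1:ℝ) else -1) * e n (x i)|)
        = fun n => |(N : ℝ)⁻¹ * ∑ i, (if ξ i then (1:ℝ) else -1) * g n (x i)| := by
      funext n
      rw [Finset.sum_congr rfl fun i _ => by rw [hBmem (x i) (hx i) n]]
    rwa [h2] at h1
  -- measurability
  have hSgM : Measurable Sg :=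
    Measurable.iSup fun n =>
      ((measurable_const.mul (Finset.measurable_sum _ fun i _ =>
        (hgM n).comp (measurable_pi_apply i))).sub measurable_const).abs
  have hRgM : ∀ ξ, Measurable (Rg ξ) := fun ξ =>
    Measurable.iSup fun n =>
      (measurable_const.mul (Finset.measurable_sum _ fun i _ =>
        (measurable_const.mul ((hgM n).comp (measurable_pi_apply i))))).abs
  have hDgM : ∀ ξ, Measurable (Dg ξ) := fun ξ =>
    Measurable.iSup fun n =>
      (measurable_const.mul (Finset.measurable_sum _ fun i _ =>
        (measurable_const.mul (((hgM n).comp (measurable_fst.comp (measurable_pi_apply i))).sub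
          ((hgM n).comp (measurable_snd.comp (measurable_pi_apply i))))))).abs
  -- integrability of Sg and Rg
  have hSeAe : (fun x : Fin N → Ω =>
      sSup ((fun h : Ω → ℝ => |(N : ℝ)⁻¹ * ∑ i, h (x i) - ∫ y, h y ∂μ|) '' F)) =ᵐ[P] Sg :=
    hG1.mono fun x hx => hSe_eq x hx
  have hSgInt : Integrable Sg P := hint1.congr hSeAe
  have hRe_nonneg : ∀ (ξ : Fin N → Bool) (x : Fin N → Ω),
      0 ≤ sSup ((fun h : Ω → ℝ =>
        |(N : ℝ)⁻¹ * ∑ i, (if ξ i then (1 : ℝ) else -1) * h (x i)|) '' F) := by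
    intro ξ x
    refine le_trans (abs_nonneg ((N : ℝ)⁻¹ * ∑ i, (if ξ i then (1:ℝ) else -1) * e 0 (x i)))
      (le_csSup (hbdd2 x ξ) (mem_image_of_mem _ (heF 0)))
  have hRgInt : ∀ ξ, Integrable (Rg ξ) P := by
    intro ξ
    refine Integrable.mono' (hint2.const_mul ((2:ℝ)^N)) (hRgM ξ).aestronglyMeasurable ?_
    filter_upwards [hG1] with x hx
    have h0 : Rg ξ x = sSup ((fun h : Ω → ℝ =>
        |(N : ℝ)⁻¹ * ∑ i, (if ξ i then (1 : ℝ) else -1) * h (x i)|) '' F) := (hRe_eq ξ x hx).symm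
    rw [Real.norm_eq_abs, h0, abs_of_nonneg (hRe_nonneg ξ x)]
    have h1 : sSup ((fun h : Ω → ℝ =>
        |(N : ℝ)⁻¹ * ∑ i, (if ξ i then (1 : ℝ) else -1) * h (x i)|) '' F)
        ≤ ∑ ξ' : Fin N → Bool, sSup ((fun h : Ω → ℝ =>
          |(N : ℝ)⁻¹ * ∑ i, (if ξ' i then (1 : ℝ) else -1) * h (x i)|) '' F) :=
      Finset.single_le_sum (fun ξ' _ => hRe_nonneg ξ' x) (Finset.mem_univ ξ)
    calc sSup _ ≤ _ := h1
      _ = (2:ℝ)^N * ((2 ^ N : ℝ)⁻¹ * ∑ ξ' : Fin N → Bool, sSup ((fun h : Ω → ℝ =>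
          |(N : ℝ)⁻¹ * ∑ i, (if ξ' i then (1 : ℝ) else -1) * h (x i)|) '' F)) := by
        rw [← mul_assoc, mul_inv_cancel₀ (by positivity), one_mul]
  -- the mean of the empirical average
  have hNne : (N : ℝ) ≠ 0 := by
    have : (0:ℝ) < N := by exact_mod_cast hN
    linarith
  have hEvalInt : ∀ (n : ℕ) (i : Fin N), Integrable (fun x : Fin N → Ω => g n (x i)) P :=
    fun n i => ((aux_eval_mp μ i).integrable_comp (hgM n).aestronglyMeasurable).mpr (hgInt n)
  have hEval : ∀ (n : ℕ) (i : Fin N), ∫ x, g n (x i) ∂P = ∫ y, g n y ∂μ := by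
    intro n i
    conv_rhs => rw [← (aux_eval_mp μ (N := N) i).map_eq]
    rw [integral_map (measurable_pi_apply i).aemeasurable (hgM n).aestronglyMeasurable]
  have hSumInt : ∀ n, Integrable (fun y : Fin N → Ω => ∑ i, g n (y i)) P :=
    fun n => integrable_finset_sum _ fun i _ => hEvalInt n i
  have hMean : ∀ n, ∫ x, ((N:ℝ)⁻¹ * ∑ i, g n (x i)) ∂P = ∫ y, g n y ∂μ := by
    intro n
    rw [integral_const_mul, integral_finset_sum _ fun i _ => hEvalInt n i,
      Finset.sum_congr rfl fun i _ => hEval n i, Finset.sum_const, Finset.card_univ,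
      Fintype.card_fin, nsmul_eq_mul, ← mul_assoc, inv_mul_cancel₀ hNne, one_mul]
  -- bounds for Dg
  have hDkey : ∀ (ξ : Fin N → Bool) (z : Fin N → Ω × Ω), (∀ i, (z i).1 ∉ B ∧ (z i).2 ∉ B) →
      BddAbove (Set.range fun n => |(N : ℝ)⁻¹ * ∑ i,
        (if ξ i then (1:ℝ) else -1) * (g n (z i).1 - g n (z i).2)|) ∧
      Dg ξ z ≤ Rg ξ (fun i => (z i).1) + Rg ξ (fun i => (z i).2) ∧ 0 ≤ Dg ξ z := by
    intro ξ z hz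
    have hb1 := hRg_bdd ξ (fun i => (z i).1) (fun i => (hz i).1)
    have hb2 := hRg_bdd ξ (fun i => (z i).2) (fun i => (hz i).2)
    have hterm : ∀ n, |(N : ℝ)⁻¹ * ∑ i, (if ξ i then (1:ℝ) else -1) * (g n (z i).1 - g n (z i).2)|
        ≤ Rg ξ (fun i => (z i).1) + Rg ξ (fun i => (z i).2) := by
      intro n
      have hsplit : (N : ℝ)⁻¹ * ∑ i, (if ξ i then (1:ℝ) else -1) * (g n (z i).1 - g n (z i).2)
          = ((N : ℝ)⁻¹ * ∑ i, (if ξ i then (1:ℝ) else -1) * g n (z i).1)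
            - ((N : ℝ)⁻¹ * ∑ i, (if ξ i then (1:ℝ) else -1) * g n (z i).2) := by
        rw [← mul_sub, ← Finset.sum_sub_distrib]
        exact congrArg _ (Finset.sum_congr rfl fun i _ => by ring)
      rw [hsplit]
      refine le_trans (abs_sub _ _) (add_le_add ?_ ?_)
      · exact le_ciSup hb1 n
      · exact le_ciSup hb2 n
    have hbdd : BddAbove (Set.range fun n => |(N : ℝ)⁻¹ * ∑ i,
        (if ξ i then (1:ℝ) else -1) * (g n (z i).1 - g n (z i).2)|) := by
      refine ⟨Rg ξ (fun i => (z i).1) + Rg ξ (fun i => (z i).2), ?_⟩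
      rintro y ⟨n, rfl⟩
      exact hterm n
    exact ⟨hbdd, ciSup_le hterm, le_trans (abs_nonneg _) (le_ciSup hbdd 0)⟩
  have hπ1 : MeasurePreserving (fun z : Fin N → Ω × Ω => fun i => (z i).1) ν P :=
    measurePreserving_pi (fun _ => μ.prod μ) (fun _ => μ) fun _ => aux_fst_mp μ μ
  have hπ2 : MeasurePreserving (fun z : Fin N → Ω × Ω => fun i => (z i).2) ν P :=
    measurePreserving_pi (fun _ => μ.prod μ) (fun _ => μ) fun _ => aux_snd_mp μ μ
  have hπ1Int : ∀ ξ, Integrable (fun z : Fin N → Ω × Ω => Rg ξ (fun i => (z i).1)) ν :=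
    fun ξ => (hπ1.integrable_comp (hRgM ξ).aestronglyMeasurable).mpr (hRgInt ξ)
  have hπ2Int : ∀ ξ, Integrable (fun z : Fin N → Ω × Ω => Rg ξ (fun i => (z i).2)) ν :=
    fun ξ => (hπ2.integrable_comp (hRgM ξ).aestronglyMeasurable).mpr (hRgInt ξ)
  have hDgInt : ∀ ξ, Integrable (Dg ξ) ν := by
    intro ξ
    refine Integrable.mono' ((hπ1Int ξ).add (hπ2Int ξ)) (hDgM ξ).aestronglyMeasurable ?_
    filter_upwards [hGZ] with z hz
    obtain ⟨hbdd, hle, hnn⟩ := hDkey ξ z hz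
    rw [Real.norm_eq_abs, abs_of_nonneg hnn]
    exact hle
  have hDswap : ∀ ξ : Fin N → Bool, ∫ z, Dg (fun _ => true) z ∂ν = ∫ z, Dg ξ z ∂ν := by
    intro ξ
    set σ : (Fin N → Ω × Ω) → (Fin N → Ω × Ω) :=
      fun z i => if ξ i then z i else Prod.swap (z i) with hσdef
    have hσm : Measurable σ := by
      refine measurable_pi_iff.mpr fun i => ?_
      by_cases h : ξ i = true
      · simpa [hσdef, h] using measurable_pi_apply i
      · have hh : Measurable fun x : Fin N → Ω × Ω => (x i).swap :=
          measurable_swap.comp (measurable_pi_apply i)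
        simpa [hσdef, h] using hh
    have hσmp : MeasurePreserving σ ν ν := by
      refine measurePreserving_pi (fun _ => μ.prod μ) (fun _ => μ.prod μ)
        (f := fun i p => if ξ i then p else Prod.swap p) fun i => ?_
      by_cases h : ξ i = true
      · have hh : MeasurePreserving (fun p : Ω × Ω => p) (μ.prod μ) (μ.prod μ) :=
          MeasurePreserving.id (μ.prod μ)
        simpa [h] using hh
      · simpa [h] using
          (Measure.measurePreserving_swap : MeasurePreserving Prod.swap
            ((μ.prod μ)) ((μ.prod μ)))
    have hinv : ∀ z, σ (σ z) = z := by
      intro z; funext i; by_cases h : ξ i = true <;> simp [hσdef, h]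
    have hemb : MeasurableEmbedding σ :=
      MeasurableEquiv.measurableEmbedding ⟨⟨σ, σ, hinv, hinv⟩, hσm, hσm⟩
    rw [← hσmp.integral_comp hemb (Dg (fun _ => true))]
    refine integral_congr_ae (Filter.Eventually.of_forall fun z => ?_)
    simp only [hDgdef]
    refine iSup_congr fun n => ?_
    congr 1
    congr 1
    refine Finset.sum_congr rfl fun i _ => ?_
    by_cases h : ξ i = true <;> simp [hσdef, h] <;> ring_nf
  have step3 : ∀ ξ : Fin N → Bool, ∫ z, Dg ξ z ∂ν ≤ 2 * ∫ x, Rg ξ x ∂P := by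
    intro ξ
    have hmono : ∫ z, Dg ξ z ∂ν
        ≤ ∫ z, (Rg ξ (fun i => (z i).1) + Rg ξ (fun i => (z i).2)) ∂ν := by
      refine integral_mono_ae (hDgInt ξ) ((hπ1Int ξ).add (hπ2Int ξ)) ?_
      filter_upwards [hGZ] with z hz
      exact (hDkey ξ z hz).2.1
    have h1 : ∫ z, Rg ξ (fun i => (z i).1) ∂ν = ∫ x, Rg ξ x ∂P := by
      conv_rhs => rw [← hπ1.map_eq]
      rw [integral_map hπ1.measurable.aemeasurable (hRgM ξ).aestronglyMeasurable]
    have h2 : ∫ z, Rg ξ (fun i => (z i).2) ∂ν = ∫ x, Rg ξ x ∂P := by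
      conv_rhs => rw [← hπ2.map_eq]
      rw [integral_map hπ2.measurable.aemeasurable (hRgM ξ).aestronglyMeasurable]
    have hsplit : ∫ z, (Rg ξ (fun i => (z i).1) + Rg ξ (fun i => (z i).2)) ∂ν
        = (∫ x, Rg ξ x ∂P) + ∫ x, Rg ξ x ∂P := by
      rw [integral_add (hπ1Int ξ) (hπ2Int ξ), h1, h2]
    linarith
  have step12 : ∫ x, Sg x ∂P ≤ ∫ z, Dg (fun _ => true) z ∂ν := by
    set DW : (Fin N → Ω) → (Fin N → Ω) → ℝ :=
      fun x y => Dg (fun _ => true) (fun i => (x i, y i)) with hDWdef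
    have hzip_good : ∀ (x y : Fin N → Ω), (∀ i, x i ∉ B) → (∀ i, y i ∉ B) →
        (∀ i : Fin N, ((fun i => (x i, y i)) i).1 ∉ B ∧ ((fun i => (x i, y i)) i).2 ∉ B) :=
      fun x y hx hy i => ⟨hx i, hy i⟩
    -- the elementary term bound
    have hterm_le : ∀ (x y : Fin N → Ω), (∀ i, x i ∉ B) → (∀ i, y i ∉ B) → ∀ n,
        |(N:ℝ)⁻¹ * ∑ i, g n (x i) - (N:ℝ)⁻¹ * ∑ i, g n (y i)| ≤ DW x y := by
      intro x y hx hy n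
      have h0 : (N:ℝ)⁻¹ * ∑ i, g n (x i) - (N:ℝ)⁻¹ * ∑ i, g n (y i)
          = (N:ℝ)⁻¹ * ∑ i, (if (fun _ : Fin N => true) i = true then (1:ℝ) else -1) *
            (g n ((fun i => (x i, y i)) i).1 - g n ((fun i => (x i, y i)) i).2) := by
        rw [← mul_sub, ← Finset.sum_sub_distrib]
        exact congrArg _ (Finset.sum_congr rfl fun i _ => by simp)
      rw [h0]
      exact le_ciSup (hDkey (fun _ => true) (fun i => (x i, y i))
        (hzip_good x y hx hy)).1 n
    -- DW is bounded by Sg ⊕ Sg on the good set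
    have hDW_le : ∀ (x y : Fin N → Ω), (∀ i, x i ∉ B) → (∀ i, y i ∉ B) →
        DW x y ≤ Sg x + Sg y := by
      intro x y hx hy
      refine ciSup_le fun n => ?_
      have h0 : (N:ℝ)⁻¹ * ∑ i, (if (fun _ : Fin N => true) i = true then (1:ℝ) else -1) *
          (g n ((fun i => (x i, y i)) i).1 - g n ((fun i => (x i, y i)) i).2)
          = ((N:ℝ)⁻¹ * ∑ i, g n (x i) - ∫ w, g n w ∂μ)
            - ((N:ℝ)⁻¹ * ∑ i, g n (y i) - ∫ w, g n w ∂μ) := by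
        have e1 : ∑ i, (if (fun _ : Fin N => true) i = true then (1:ℝ) else -1) *
            (g n ((fun i => (x i, y i)) i).1 - g n ((fun i => (x i, y i)) i).2)
            = ∑ i, g n (x i) - ∑ i, g n (y i) := by
          rw [← Finset.sum_sub_distrib]
          exact Finset.sum_congr rfl fun i _ => by simp
        rw [e1]
        ring
      show |(N:ℝ)⁻¹ * ∑ i, (if (fun _ : Fin N => true) i = true then (1:ℝ) else -1) *
          (g n ((fun i => (x i, y i)) i).1 - g n ((fun i => (x i, y i)) i).2)| ≤ Sg x + Sg y
      rw [h0]
      refine le_trans (abs_sub _ _) (add_le_add ?_ ?_)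
      · exact le_ciSup (hSg_bdd x hx) n
      · exact le_ciSup (hSg_bdd y hy) n
    have hDW_nonneg : ∀ (x y : Fin N → Ω), (∀ i, x i ∉ B) → (∀ i, y i ∉ B) → 0 ≤ DW x y :=
      fun x y hx hy => (hDkey (fun _ => true) (fun i => (x i, y i)) (hzip_good x y hx hy)).2.2
    -- integrability of DW in the second variable for fixed good x
    have hDWm : ∀ x : Fin N → Ω, Measurable (fun y => DW x y) := by
      intro x
      refine (hDgM (fun _ => true)).comp (measurable_pi_iff.mpr fun i => ?_)
      exact Measurable.prodMk measurable_const (measurable_pi_apply i)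
    have hDWInt : ∀ x : Fin N → Ω, (∀ i, x i ∉ B) → Integrable (fun y => DW x y) P := by
      intro x hx
      refine Integrable.mono' ((integrable_const (Sg x)).add hSgInt)
        (hDWm x).aestronglyMeasurable ?_
      filter_upwards [hG1] with y hy
      rw [Real.norm_eq_abs, abs_of_nonneg (hDW_nonneg x y hx hy)]
      exact hDW_le x y hx hy
    -- pointwise step 1
    have step1 : ∀ x : Fin N → Ω, (∀ i, x i ∉ B) → Sg x ≤ ∫ y, DW x y ∂P := by
      intro x hx
      refine ciSup_le fun n => ?_
      have hconst : (N:ℝ)⁻¹ * ∑ i, g n (x i) - ∫ y, g n y ∂μ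
          = ∫ y, ((N:ℝ)⁻¹ * ∑ i, g n (x i) - (N:ℝ)⁻¹ * ∑ i, g n (y i)) ∂P := by
        rw [integral_sub (integrable_const _) ((hSumInt n).const_mul _), integral_const]
        simp [hMean n]
      show |(N:ℝ)⁻¹ * ∑ i, g n (x i) - ∫ y, g n y ∂μ| ≤ ∫ y, DW x y ∂P
      rw [hconst]
      refine le_trans ?_ (integral_mono_ae
        (((integrable_const _).sub ((hSumInt n).const_mul _)).abs) (hDWInt x hx)
        (hG1.mono fun y hy => hterm_le x y hx hy n))
      simpa [Real.norm_eq_abs] using norm_integral_le_integral_norm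
        (fun y : Fin N → Ω => (N:ℝ)⁻¹ * ∑ i, g n (x i) - (N:ℝ)⁻¹ * ∑ i, g n (y i))
    -- integrability of DW on the product space
    have hE := MeasureTheory.measurePreserving_arrowProdEquivProdArrow Ω Ω (Fin N)
      (fun _ => μ) (fun _ => μ)
    have hDWprodM : Measurable (fun w : (Fin N → Ω) × (Fin N → Ω) => DW w.1 w.2) := by
      refine (hDgM (fun _ => true)).comp (measurable_pi_iff.mpr fun i => ?_)
      exact Measurable.prodMk ((measurable_pi_apply i).comp measurable_fst)
        ((measurable_pi_apply i).comp measurable_snd)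
    have hDWprodInt : Integrable (fun w : (Fin N → Ω) × (Fin N → Ω) => DW w.1 w.2)
        (P.prod P) :=
      (hE.integrable_comp hDWprodM.aestronglyMeasurable).mp (hDgInt (fun _ => true))
    calc ∫ x, Sg x ∂P ≤ ∫ x, (∫ y, DW x y ∂P) ∂P := by
          refine integral_mono_ae hSgInt hDWprodInt.integral_prod_left ?_
          exact hG1.mono fun x hx => step1 x hx
      _ = ∫ w : (Fin N → Ω) × (Fin N → Ω), DW w.1 w.2 ∂(P.prod P) :=
          integral_integral hDWprodInt
      _ = ∫ z, Dg (fun _ => true) z ∂ν :=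
          (MeasurePreserving.integral_comp' hE
            (fun w : (Fin N → Ω) × (Fin N → Ω) => DW w.1 w.2)).symm
  -- assembling everything
  have hTeAe : (fun x : Fin N → Ω => (2 ^ N : ℝ)⁻¹ * ∑ ξ : Fin N → Bool,
      sSup ((fun h : Ω → ℝ =>
        |(N : ℝ)⁻¹ * ∑ i, (if ξ i then (1 : ℝ) else -1) * h (x i)|) '' F))
      =ᵐ[P] fun x => (2 ^ N : ℝ)⁻¹ * ∑ ξ : Fin N → Bool, Rg ξ x :=
    hG1.mono fun x hx =>
      congrArg (fun s => (2 ^ N : ℝ)⁻¹ * s) (Finset.sum_congr rfl fun ξ _ => hRe_eq ξ x hx)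
  rw [integral_congr_ae hSeAe, integral_congr_ae hTeAe]
  have hTg : ∫ x, ((2 ^ N : ℝ)⁻¹ * ∑ ξ : Fin N → Bool, Rg ξ x) ∂P
      = (2 ^ N : ℝ)⁻¹ * ∑ ξ : Fin N → Bool, ∫ x, Rg ξ x ∂P := by
    rw [integral_const_mul, integral_finset_sum _ fun ξ _ => hRgInt ξ]
  rw [hTg]
  have hcard : (Finset.univ : Finset (Fin N → Bool)).card = 2 ^ N := by
    simp [Finset.card_univ]
  calc ∫ x, Sg x ∂P ≤ ∫ z, Dg (fun _ => true) z ∂ν := step12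
    _ = (2 ^ N : ℝ)⁻¹ * ∑ ξ : Fin N → Bool, ∫ z, Dg ξ z ∂ν := by
        rw [Finset.sum_congr rfl fun ξ _ => (hDswap ξ).symm, Finset.sum_const, hcard,
          nsmul_eq_mul]
        push_cast
        rw [← mul_assoc, inv_mul_cancel₀ (by positivity), one_mul]
    _ ≤ (2 ^ N : ℝ)⁻¹ * ∑ ξ : Fin N → Bool, 2 * ∫ x, Rg ξ x ∂P :=
        mul_le_mul_of_nonneg_left (Finset.sum_le_sum fun ξ _ => step3 ξ) (by positivity)
    _ = 2 * ((2 ^ N : ℝ)⁻¹ * ∑ ξ : Fin N → Bool, ∫ x, Rg ξ x ∂P) := by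
        rw [Finset.mul_sum, Finset.mul_sum, Finset.mul_sum]
        exact Finset.sum_congr rfl fun ξ _ => by ring
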